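/- Let Z be a real-valued random variable with law P0 having finite moment generating function E_{P0}[e^{λZ}] < ∞ for every λ ∈ ℝ. Suppose the infimum inf_{λ∈ℝ} E_{P0}[e^{λZ}] is attained at some λ* ∈ ℝ. Then the probability measure Q defined by dQ(z) = e^{λ* z} / E_{P0}[e^{λ* Z}] dP0(z) attains the supremum defining the s-value of the mean; that is, E_Q[Z] = 0 and exp(−D_KL(Q‖P0)) = inf_{λ∈ℝ} E_{P0}[e^{λZ}]. -/

import Mathlib

open MeasureTheory ProbabilityTheory Real
open scoped ENNReal NNReal Classical

/-- Kullback–Leibler divergence `D_KL(P‖P₀)`, valued in `ℝ≥0∞`: it is the integral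
`∫ log (dP/dP₀) dP` when `P ≪ P₀` (and the integrand is integrable), and `+∞` otherwise. -/
noncomputable def KLdiv {α : Type*} [MeasurableSpace α] (P P₀ : Measure α) : ℝ≥0∞ :=
  if P ≪ P₀ ∧ Integrable (llr P P₀) P then ENNReal.ofReal (∫ x, llr P P₀ x ∂P) else ⊤

/-- `exp(−D_KL(P‖P₀))`, with the convention `exp(−∞) = 0`. -/
noncomputable def expNegKL {α : Type*} [MeasurableSpace α] (P P₀ : Measure α) : ℝ :=
  if KLdiv P P₀ = ⊤ then 0 else Real.exp (-(KLdiv P P₀).toReal)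

/-- Integrability of `z ↦ z * exp (lstar * z)` and differentiability of the mgf. -/
lemma mgf_hasDerivAt (P₀ : Measure ℝ) [IsProbabilityMeasure P₀]
    (hmgf : ∀ l : ℝ, Integrable (fun z => Real.exp (l * z)) P₀) (lstar : ℝ) :
    Integrable (fun z => z * Real.exp (lstar * z)) P₀ ∧
      HasDerivAt (fun l => ∫ z, Real.exp (l * z) ∂P₀)
        (∫ z, z * Real.exp (lstar * z) ∂P₀) lstar := by
  have h := hasDerivAt_integral_of_dominated_loc_of_deriv_le (μ := P₀)
      (F := fun l z => Real.exp (l * z)) (F' := fun l z => z * Real.exp (l * z))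
      (x₀ := lstar) (s := Metric.ball lstar 1)
      (bound := fun z => Real.exp ((lstar + 2) * z) + Real.exp ((lstar - 2) * z))
      (Metric.ball_mem_nhds _ one_pos)
      (Filter.Eventually.of_forall fun l => (hmgf l).1)
      (hmgf lstar)
      ((measurable_id.mul (measurable_exp.comp (measurable_const_mul _))).aestronglyMeasurable)
      ?_ ((hmgf _).add (hmgf _)) ?_
  · exact ⟨h.1, h.2⟩
  · refine Filter.Eventually.of_forall fun z l hl => ?_
    have hl' : |l - lstar| < 1 := by simpa [Real.dist_eq] using hl
    have h1 : |z * Real.exp (l * z)| ≤ Real.exp (|z| + l * z) := by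
      rw [abs_mul, abs_of_pos (Real.exp_pos _), Real.exp_add]
      exact mul_le_mul_of_nonneg_right (le_trans (by linarith [Real.add_one_le_exp |z|]) le_rfl)
        (Real.exp_pos _).le
    refine h1.trans ?_
    rcases le_or_gt 0 z with hz | hz
    · have : |z| + l * z ≤ (lstar + 2) * z := by
        rw [abs_of_nonneg hz]; nlinarith [abs_sub_lt_iff.mp hl']
      exact le_trans (Real.exp_le_exp.mpr this) (le_add_of_nonneg_right (Real.exp_pos _).le)
    · have : |z| + l * z ≤ (lstar - 2) * z := by
        rw [abs_of_neg hz]; nlinarith [abs_sub_lt_iff.mp hl']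
      exact le_trans (Real.exp_le_exp.mpr this) (le_add_of_nonneg_left (Real.exp_pos _).le)
  · refine Filter.Eventually.of_forall fun z l _ => ?_
    simpa [mul_comm] using
      ((hasDerivAt_mul_const z).exp : HasDerivAt (fun l => Real.exp (l * z)) _ l)

/-- if the infimum `inf_λ E_{P₀}[e^{λZ}]` is attained at `λ*`, then the
exponentially tilted measure `dQ(z) = e^{λ* z} / E_{P₀}[e^{λ* Z}] dP₀(z)` attains the supremum
defining the s-value of the mean: `E_Q[Z] = 0` and `exp(−D_KL(Q‖P₀)) = inf_λ E_{P₀}[e^{λZ}]`. -/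
theorem tilted_measure_attains_svalue_mean (P₀ : Measure ℝ) [IsProbabilityMeasure P₀]
    (hmgf : ∀ l : ℝ, Integrable (fun z => Real.exp (l * z)) P₀)
    (lstar : ℝ)
    (hmin : ∀ l : ℝ, ∫ z, Real.exp (lstar * z) ∂P₀ ≤ ∫ z, Real.exp (l * z) ∂P₀) :
    let Q : Measure ℝ := P₀.withDensity
      (fun z => ENNReal.ofReal (Real.exp (lstar * z) / ∫ z', Real.exp (lstar * z') ∂P₀))
    Integrable (fun z => z) Q ∧ ∫ z, z ∂Q = 0 ∧
      expNegKL Q P₀ = ⨅ l : ℝ, ∫ z, Real.exp (l * z) ∂P₀ := by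
  intro Q
  set M : ℝ := ∫ z, Real.exp (lstar * z) ∂P₀ with hMdef
  have hint : Integrable (fun z => Real.exp (lstar * z)) P₀ := hmgf lstar
  have hM : 0 < M := integral_exp_pos hint
  have hM1 : M ≤ 1 := by simpa using hmin 0
  have hQt : Q = P₀.tilted (fun z => lstar * z) := rfl
  -- derivative zero at the min
  have hd := mgf_hasDerivAt P₀ hmgf lstar
  have hmin' : IsLocalMin (fun l => ∫ z, Real.exp (l * z) ∂P₀) lstar :=
    Filter.Eventually.of_forall fun l => hmin l
  have hzero : ∫ z, z * Real.exp (lstar * z) ∂P₀ = 0 := hmin'.hasDerivAt_eq_zero hd.2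
  -- integrability of z w.r.t. Q
  have hmeasd : Measurable (fun z : ℝ => ENNReal.ofReal (Real.exp (lstar * z) / M)) :=
    ((measurable_exp.comp (measurable_const_mul _)).div_const _).ennreal_ofReal
  have hiz : Integrable (fun z => z) Q := by
    rw [show Q = P₀.withDensity (fun z => ENNReal.ofReal (Real.exp (lstar * z) / M)) from rfl,
      integrable_withDensity_iff hmeasd
        (Filter.Eventually.of_forall fun _ => ENNReal.ofReal_lt_top)]
    have : (fun z : ℝ => z * (ENNReal.ofReal (Real.exp (lstar * z) / M)).toReal)
        = fun z => (z * Real.exp (lstar * z)) / M := by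
      funext z
      rw [ENNReal.toReal_ofReal (by positivity)]
      ring
    rw [this]
    exact hd.1.div_const M
  have hizero : ∫ z, z ∂Q = 0 := by
    rw [hQt, integral_tilted]
    have : (fun z : ℝ => (Real.exp (lstar * z) / M) • z)
        = fun z => (z * Real.exp (lstar * z)) / M := by
      funext z; simp [smul_eq_mul]; ring
    rw [this, integral_div, hzero, zero_div]
  refine ⟨hiz, hizero, ?_⟩
  -- KL part
  have hQP : Q ≪ P₀ := hQt ▸ tilted_absolutelyContinuous P₀ _
  have hprob : IsProbabilityMeasure Q := hQt ▸ isProbabilityMeasure_tilted hint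
  have hllr : llr Q P₀ =ᵐ[Q] fun z => lstar * z - Real.log M := by
    have h0 : llr Q P₀ =ᵐ[P₀] fun z => lstar * z - Real.log M := by
      have := log_rnDeriv_tilted_left_self (μ := P₀) (f := fun z => lstar * z) hint
      filter_upwards [this] with x hx
      simpa [llr_def, hQt] using hx
    exact hQP.ae_le h0
  have hillr : Integrable (llr Q P₀) Q :=
    (((hiz.const_mul lstar).sub (integrable_const _)).congr hllr.symm)
  have hIval : ∫ x, llr Q P₀ x ∂Q = - Real.log M := by
    rw [integral_congr_ae hllr, integral_sub (hiz.const_mul lstar) (integrable_const _),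
      integral_const_mul, hizero, integral_const]
    simp
  have hKL : KLdiv Q P₀ = ENNReal.ofReal (- Real.log M) := by
    rw [KLdiv, if_pos ⟨hQP, hillr⟩, hIval]
  have hne : KLdiv Q P₀ ≠ ⊤ := by rw [hKL]; exact ENNReal.ofReal_ne_top
  have hinf : (⨅ l : ℝ, ∫ z, Real.exp (l * z) ∂P₀) = M := by
    refine le_antisymm (ciInf_le ⟨0, ?_⟩ lstar) (le_ciInf hmin)
    rintro x ⟨l, rfl⟩
    exact integral_nonneg fun z => (Real.exp_pos _).le
  rw [hinf, expNegKL, if_neg hne, hKL,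
    ENNReal.toReal_ofReal (neg_nonneg.mpr (Real.log_nonpos hM.le hM1)), neg_neg, Real.exp_log hM]
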